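/- Let T₁, T₂ ≥ 0 and m ≥ 1 be natural numbers and set T = (T₁+1)·m. Define the sawtooth sequence w : ℕ → ℕ by w(t) = (t mod m) + 1, so that ∑_{t=0}^{T-1} w(t) = (T₁+1)·m(m+1)/2 = (T/2)(1 + T/(T₁+1)). Let v : ℕ → ℕ be any age sequence over horizon T (v(0) ≥ 1 and for every t, v(t+1) = 1 or v(t+1) = v(t)+1) whose number of update slots is at most T₁ + T₂. Then (∑_{t=0}^{T-1} w(t)) / (∑_{t=0}^{T-1} v(t)) ≤ ((1 + T₁ + T)/(1 + T₂ + T₁ + T))·(1 + T₂/(T₁+1)). -/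

import Mathlib

open Finset

/-- Sum of `t % m` over a full number of periods. -/
lemma sum_mod_blocks (m : ℕ) : ∀ n : ℕ,
    ∑ t ∈ range (n * m), (t % m) = n * ∑ t ∈ range m, t := by
  intro n
  induction n with
  | zero => simp
  | succ k ih =>
    have h : (k + 1) * m = k * m + m := by ring
    rw [h, Finset.sum_range_add, ih]
    have h2 : ∑ t ∈ range m, (k * m + t) % m = ∑ t ∈ range m, t := by
      apply Finset.sum_congr rfl
      intro t ht
      rw [add_comm, Nat.add_mul_mod_self_right, Nat.mod_eq_of_lt (mem_range.mp ht)]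
    rw [h2]; ring

/-- Gauss sum in the reals. -/
lemma gauss_real : ∀ n : ℕ, (∑ s ∈ range n, (s : ℝ)) = (n : ℝ) * ((n : ℝ) - 1) / 2 := by
  intro n
  induction n with
  | zero => simp
  | succ k ih =>
    rw [Finset.sum_range_succ, ih]
    push_cast
    ring

/-- Theorem 1 of the paper: the sawtooth age sequence `w t = (t % m) + 1` of the
deterministic policy `π̂` (blocks of length `m = T/(T₁+1)`) against the worst adversary,
compared to any age sequence `v` with at most `T₁ + T₂` update slots, has ratio of
total ages at most `((1+T₁+T)/(1+T₂+T₁+T))·(1+T₂/(T₁+1))`. -/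
theorem stmt_2 (T₁ T₂ m : ℕ) (hm : 1 ≤ m) (T : ℕ) (hT : T = (T₁ + 1) * m)
    (v : ℕ → ℕ) (h0 : 1 ≤ v 0)
    (hstep : ∀ t, v (t + 1) = 1 ∨ v (t + 1) = v t + 1)
    (hupd : ((Finset.range T).filter (fun t => t + 1 ≤ T - 1 ∧ v (t + 1) = 1)).card
      ≤ T₁ + T₂) :
    (∑ t ∈ Finset.range T, (((t % m : ℕ) : ℝ) + 1)) / (∑ t ∈ Finset.range T, (v t : ℝ))
      ≤ ((1 + (T₁ : ℝ) + T) / (1 + (T₂ : ℝ) + T₁ + T)) * (1 + (T₂ : ℝ) / ((T₁ : ℝ) + 1)) := by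
  obtain ⟨K, hK⟩ : ∃ K, K = T₁ + T₂ := ⟨_, rfl⟩
  obtain ⟨c, hc⟩ : ∃ c, c = K + 1 := ⟨_, rfl⟩
  have hupd' : ((Finset.range T).filter (fun t => t + 1 ≤ T - 1 ∧ v (t + 1) = 1)).card ≤ K := by
    omega
  have hT1 : 1 ≤ T := by
    rw [hT]; exact Nat.one_le_iff_ne_zero.mpr (by positivity)
  -- every age is at least 1
  have hv1 : ∀ t, 1 ≤ v t := by
    intro t
    induction t with
    | zero => exact h0
    | succ n ih => rcases hstep n with h | h <;> omega
  -- structural lemma: the last reset position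
  have hA : ∀ t, v t ≤ t → v (t + 1 - v t) = 1 := by
    intro t
    induction t with
    | zero => intro h; have := hv1 0; omega
    | succ n ih =>
      intro h
      rcases hstep n with h1 | h1
      · have he : n + 1 + 1 - v (n + 1) = n + 1 := by omega
        rw [he, h1]
      · have hn : v n ≤ n := by omega
        have hvr := ih hn
        have he : n + 1 + 1 - v (n + 1) = n + 1 - v n := by
          have := hv1 n; omega
        rw [he]; exact hvr
  -- reset positions
  have hreset : ((Finset.Icc 1 (T - 1)).filter (fun r => v r = 1)).card ≤ K := by
    refine le_trans ?_ hupd'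
    apply Finset.card_le_card_of_injOn (fun r => r - 1)
    · intro r hr
      simp only [mem_filter, mem_Icc] at hr ⊢
      simp only [mem_coe, mem_filter, mem_Icc, mem_range] at hr ⊢
      have h1 : 1 ≤ r := hr.1.1
      have h2 : r ≤ T - 1 := hr.1.2
      refine ⟨by omega, by omega, ?_⟩
      have he : r - 1 + 1 = r := by omega
      rw [he]; exact hr.2
    · intro a ha b hb hab
      simp only [mem_coe, mem_filter, mem_Icc] at ha hb
      have hab' : a - 1 = b - 1 := hab
      omega
  -- candidate set of last-reset positions
  have hRScard : (insert 0 ((Finset.Icc 1 (T - 1)).filter (fun r => v r = 1))).card ≤ c := by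
    refine le_trans (Finset.card_insert_le _ _) ?_
    omega
  -- counting lemma: few slots have small age
  have hB : ∀ s, ((range T).filter (fun t => v t ≤ s)).card ≤ c * s := by
    intro s
    have hinj : ((range T).filter (fun t => v t ≤ s)).card
        ≤ ((insert 0 ((Finset.Icc 1 (T - 1)).filter (fun r => v r = 1))) ×ˢ range s).card := by
      apply Finset.card_le_card_of_injOn (fun t => (t + 1 - v t, t - (t + 1 - v t)))
      · intro t ht
        simp only [mem_coe, mem_filter, mem_range] at ht
        obtain ⟨htT, hts⟩ := ht
        simp only [mem_coe, Finset.mem_product, mem_range]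
        have hvt := hv1 t
        by_cases hcase : v t ≤ t
        · constructor
          · apply Finset.mem_insert_of_mem
            simp only [mem_filter, mem_Icc]
            exact ⟨⟨by omega, by omega⟩, hA t hcase⟩
          · omega
        · constructor
          · have he : t + 1 - v t = 0 := by omega
            rw [he]; exact Finset.mem_insert_self 0 _
          · omega
      · intro a ha b hb hab
        simp only [mem_coe, mem_filter, mem_range] at ha hb
        simp only [Prod.mk.injEq] at hab
        have := hv1 a; have := hv1 b
        omega
    calc ((range T).filter (fun t => v t ≤ s)).card
        ≤ ((insert 0 ((Finset.Icc 1 (T - 1)).filter (fun r => v r = 1))) ×ˢ range s).card := hinj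
      _ = (insert 0 ((Finset.Icc 1 (T - 1)).filter (fun r => v r = 1))).card * s := by
          rw [Finset.card_product, Finset.card_range]
      _ ≤ c * s := Nat.mul_le_mul_right s hRScard
  -- complement count
  have hcount : ∀ s, T - c * s ≤ ((range T).filter (fun t => s < v t)).card := by
    intro s
    have hsplit : ((range T).filter (fun t => v t ≤ s)).card
        + ((range T).filter (fun t => ¬ v t ≤ s)).card = T := by
      rw [Finset.card_filter_add_card_filter_not, Finset.card_range]
    have heq : (range T).filter (fun t => ¬ v t ≤ s) = (range T).filter (fun t => s < v t) := by
      apply Finset.filter_congr; intro t _; simp [Nat.not_le]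
    rw [heq] at hsplit
    have := hB s
    omega
  -- layer-cake lower bound on the sum of v
  have hswap : ∀ S : ℕ,
      ∑ s ∈ range S, ((range T).filter (fun t => s < v t)).card ≤ ∑ t ∈ range T, v t := by
    intro S
    have h1 : ∀ s : ℕ, ((range T).filter (fun t => s < v t)).card
        = ∑ t ∈ range T, (if s < v t then 1 else 0) := by
      intro s; rw [Finset.card_filter]
    calc ∑ s ∈ range S, ((range T).filter (fun t => s < v t)).card
        = ∑ s ∈ range S, ∑ t ∈ range T, (if s < v t then 1 else 0) :=
          Finset.sum_congr rfl (fun s _ => h1 s)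
      _ = ∑ t ∈ range T, ∑ s ∈ range S, (if s < v t then 1 else 0) := Finset.sum_comm
      _ ≤ ∑ t ∈ range T, v t := by
          apply Finset.sum_le_sum
          intro t _
          rw [← Finset.card_filter]
          calc ((range S).filter (fun s => s < v t)).card
              ≤ (range (v t)).card := by
                apply Finset.card_le_card
                intro s hs
                simp only [mem_filter, mem_range] at hs ⊢
                exact hs.2
            _ = v t := Finset.card_range (v t)
  -- choose S = ceil(T / c)
  obtain ⟨S, hS⟩ : ∃ S, S = (T + K) / c := ⟨_, rfl⟩
  have hmod : (T + K) % c + c * S = T + K := by rw [hS]; exact Nat.mod_add_div _ _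
  have hmodlt : (T + K) % c < c := Nat.mod_lt _ (by omega)
  have hcS1 : T ≤ c * S := by omega
  have hcS2 : c * S ≤ T + K := by omega
  have hterm : ∀ s ∈ range S, c * s + c ≤ c * S := by
    intro s hs
    have hs' : s < S := mem_range.mp hs
    calc c * s + c = c * (s + 1) := by ring
      _ ≤ c * S := Nat.mul_le_mul_left c (by omega)
  -- lower bound in ℕ
  have hlow : ∑ s ∈ range S, (T - c * s) ≤ ∑ t ∈ range T, v t := by
    refine le_trans ?_ (hswap S)
    exact Finset.sum_le_sum (fun s _ => hcount s)
  -- cast everything to ℝ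
  have hvsum_pos : (0 : ℝ) < ∑ t ∈ range T, (v t : ℝ) := by
    apply Finset.sum_pos
    · intro t _
      exact_mod_cast hv1 t
    · exact Finset.nonempty_range_iff.mpr (by omega)
  have hsumcast : (↑(∑ s ∈ range S, (T - c * s)) : ℝ)
      = (S : ℝ) * T - (c : ℝ) * ((S : ℝ) * ((S : ℝ) - 1) / 2) := by
    have h1 : (↑(∑ s ∈ range S, (T - c * s)) : ℝ) = ∑ s ∈ range S, ((T : ℝ) - (c : ℝ) * s) := by
      push_cast
      apply Finset.sum_congr rfl
      intro s hs
      have h2 := hterm s hs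
      have hle : c * s ≤ T := by omega
      push_cast [Nat.cast_sub hle]
      ring
    rw [h1, Finset.sum_sub_distrib, Finset.sum_const, Finset.card_range, ← Finset.mul_sum,
      gauss_real S, nsmul_eq_mul]
  -- key real lower bound on sum of v
  have hkey : (T : ℝ) * ((T : ℝ) + c) / (2 * c) ≤ ∑ t ∈ range T, (v t : ℝ) := by
    have h1 : (↑(∑ s ∈ range S, (T - c * s)) : ℝ) ≤ ∑ t ∈ range T, (v t : ℝ) := by
      exact_mod_cast hlow
    rw [hsumcast] at h1
    refine le_trans ?_ h1
    have hd0 : (T : ℝ) ≤ (c : ℝ) * S := by exact_mod_cast hcS1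
    have hdc : (c : ℝ) * S ≤ (T : ℝ) + c - 1 := by
      have h2 : ((c * S : ℕ) : ℝ) ≤ ((T + K : ℕ) : ℝ) := Nat.cast_le.mpr hcS2
      push_cast at h2
      have h3 : (K : ℝ) = (c : ℝ) - 1 := by
        have : (c : ℝ) = (K : ℝ) + 1 := by exact_mod_cast hc
        linarith
      linarith
    have hcpos : (0 : ℝ) < c := by
      have : 1 ≤ c := by omega
      exact_mod_cast Nat.lt_of_lt_of_le Nat.zero_lt_one this
    rw [div_le_iff₀ (by positivity)]
    nlinarith [mul_nonneg (by linarith : (0:ℝ) ≤ (c : ℝ) * S - T)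
      (by linarith : (0:ℝ) ≤ (c : ℝ) - ((c : ℝ) * S - T))]
  -- compute the numerator
  have hw : (∑ t ∈ Finset.range T, (((t % m : ℕ) : ℝ) + 1)) = (T : ℝ) * ((m : ℝ) + 1) / 2 := by
    rw [Finset.sum_add_distrib, Finset.sum_const, Finset.card_range, nsmul_eq_mul, mul_one]
    have h1 : ∑ t ∈ range T, (t % m) = (T₁ + 1) * ∑ t ∈ range m, t := by
      rw [hT]; exact sum_mod_blocks m (T₁ + 1)
    have h3 : (∑ t ∈ range T, ((t % m : ℕ) : ℝ))
        = ((T₁ : ℝ) + 1) * ((m : ℝ) * ((m : ℝ) - 1) / 2) := by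
      have h4 : (∑ t ∈ range T, ((t % m : ℕ) : ℝ)) = ((∑ t ∈ range T, (t % m) : ℕ) : ℝ) := by
        push_cast; rfl
      rw [h4, h1]
      push_cast [gauss_real m]
      ring
    rw [h3]
    have hTr : (T : ℝ) = ((T₁ : ℝ) + 1) * m := by rw [hT]; push_cast; ring
    rw [hTr]
    ring
  -- finish
  have hcK : (c : ℝ) = 1 + (T₂ : ℝ) + T₁ := by
    have : (c : ℕ) = 1 + T₂ + T₁ := by omega
    exact_mod_cast this
  have hcpos : (0 : ℝ) < c := by
    have h1 : 1 ≤ c := by omega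
    exact_mod_cast Nat.lt_of_lt_of_le Nat.zero_lt_one h1
  have hRHS : ((1 + (T₁ : ℝ) + T) / (1 + (T₂ : ℝ) + T₁ + T)) * (1 + (T₂ : ℝ) / ((T₁ : ℝ) + 1))
      = (c : ℝ) * ((m : ℝ) + 1) / ((c : ℝ) + T) := by
    have hTr : (T : ℝ) = ((T₁ : ℝ) + 1) * m := by rw [hT]; push_cast; ring
    rw [hcK, hTr]
    have h1 : (0 : ℝ) < (T₁ : ℝ) + 1 := by positivity
    have h2 : (0 : ℝ) < (1 : ℝ) + T₂ + T₁ + ((T₁ : ℝ) + 1) * m := by positivity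
    field_simp
    ring
  rw [hRHS, hw, div_le_iff₀ hvsum_pos]
  have hRpos : (0 : ℝ) ≤ (c : ℝ) * ((m : ℝ) + 1) / ((c : ℝ) + T) := by positivity
  calc (T : ℝ) * ((m : ℝ) + 1) / 2
      = ((c : ℝ) * ((m : ℝ) + 1) / ((c : ℝ) + T)) * ((T : ℝ) * ((T : ℝ) + c) / (2 * c)) := by
        have h2 : (0 : ℝ) < (c : ℝ) + T := by positivity
        field_simp
        ring
    _ ≤ ((c : ℝ) * ((m : ℝ) + 1) / ((c : ℝ) + T)) * (∑ t ∈ range T, (v t : ℝ)) :=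
        mul_le_mul_of_nonneg_left hkey hRpos
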